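/- For every nonnegative integer n and every real (or indeterminate) μ, the determinant of the n×n matrix with (i,j) entry c^{(0)}_{i,j} = 2 − δ_{i,j}·2μ/(4i+1) (for 1 ≤ i,j ≤ n) equals ((−1)^n / (2^n · (5/4)_n)) · μ^{n−1} · (μ − 2n² − 3n). -/

import Mathlib

open Matrix Finset

lemma prod_45 (n : ℕ) :
    ∏ i : Fin n, (4 * ((i : ℕ) + 1 : ℝ) + 1) = 4 ^ n * (ascPochhammer ℝ n).eval (5 / 4 : ℝ) := by
  induction n with
  | zero => simp
  | succ m ih =>
    rw [Fin.prod_univ_castSucc]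
    simp only [Fin.coe_castSucc, Fin.val_last]
    rw [ih, ascPochhammer_succ_eval]
    push_cast
    ring

lemma sum_45 (n : ℕ) :
    ∑ i : Fin n, (4 * ((i : ℕ) + 1 : ℝ) + 1) = 2 * (n : ℝ) ^ 2 + 3 * n := by
  induction n with
  | zero => simp
  | succ m ih =>
    rw [Fin.sum_univ_castSucc]
    simp only [Fin.coe_castSucc, Fin.val_last]
    rw [ih]
    push_cast
    ring

theorem det_C0 (n : ℕ) (mu : ℝ) :
    Matrix.det (Matrix.of (fun i j : Fin n =>
      2 - (if i = j then 2 * mu / (4 * ((i : ℕ) + 1 : ℝ) + 1) else 0)))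
    = if n = 0 then 1 else
        (-1) ^ n / (2 ^ n * (ascPochhammer ℝ n).eval (5 / 4 : ℝ)) *
          mu ^ (n - 1) * (mu - 2 * (n : ℝ) ^ 2 - 3 * (n : ℝ)) := by
  rcases Nat.eq_zero_or_pos n with hn | hn
  · subst hn; simp [Matrix.det_fin_zero]
  rw [if_neg hn.ne']
  have hP : (0:ℝ) < (ascPochhammer ℝ n).eval (5 / 4 : ℝ) :=
    ascPochhammer_pos n _ (by norm_num)
  by_cases hmu : mu = 0
  · subst hmu
    rcases Nat.lt_or_ge n 2 with h2 | h2
    · interval_cases n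
      · simp [Matrix.det_fin_one, ascPochhammer_succ_eval]
        norm_num
    · have h0 : (⟨0, by omega⟩ : Fin n) ≠ (⟨1, by omega⟩ : Fin n) := by
        simp [Fin.ext_iff]
      rw [Matrix.det_zero_of_row_eq h0 ?_]
      · have : n - 1 ≠ 0 := by omega
        simp [zero_pow this]
      · funext j
        simp only [Matrix.of_apply]
        simp [mul_zero, zero_div]
  -- main case: mu ≠ 0
  set d : Fin n → ℝ := fun i => -(2 * mu / (4 * ((i : ℕ) + 1 : ℝ) + 1)) with hd
  have hpos : ∀ i : Fin n, (0:ℝ) < 4 * ((i : ℕ) + 1 : ℝ) + 1 := by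
    intro i; positivity
  have hdne : ∀ i, d i ≠ 0 := by
    intro i
    simp only [hd, neg_ne_zero]
    exact div_ne_zero (by simpa using hmu) (hpos i).ne'
  have key : Matrix.of (fun i j : Fin n =>
      2 - (if i = j then 2 * mu / (4 * ((i : ℕ) + 1 : ℝ) + 1) else 0))
      = Matrix.diagonal d + Matrix.replicateCol Unit (fun _ : Fin n => (2:ℝ)) * Matrix.replicateRow Unit (fun _ : Fin n => (1:ℝ)) := by
    ext i j
    simp only [Matrix.of_apply, Matrix.add_apply, Matrix.diagonal_apply, Matrix.mul_apply,
      Matrix.replicateCol_apply, Matrix.replicateRow_apply, hd]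
    by_cases h : i = j <;> simp [h] <;> ring
  have hinv : (Matrix.diagonal d)⁻¹ = Matrix.diagonal (fun i => (d i)⁻¹) := by
    refine Matrix.inv_eq_right_inv ?_
    rw [Matrix.diagonal_mul_diagonal]
    convert Matrix.diagonal_one with i
    exact mul_inv_cancel₀ (hdne i)
  rw [key, Matrix.det_add_replicateCol_mul_replicateRow (by
    rw [Matrix.det_diagonal]
    exact (Finset.prod_ne_zero_iff.mpr fun i _ => hdne i).isUnit)]
  rw [Matrix.det_diagonal, hinv, Matrix.det_unique]
  have heval : ((1 + Matrix.replicateRow Unit (fun _ : Fin n => (1:ℝ)) * Matrix.diagonal (fun i => (d i)⁻¹) *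
      Matrix.replicateCol Unit (fun _ : Fin n => (2:ℝ)) : Matrix Unit Unit ℝ)) default default
      = 1 + ∑ i : Fin n, 2 * (d i)⁻¹ := by
    simp [Matrix.mul_apply, Matrix.diagonal_apply, Finset.mul_sum, mul_comm]
  rw [heval]
  have hdi : ∀ i : Fin n, (d i)⁻¹ = -((4 * ((i : ℕ) + 1 : ℝ) + 1) / (2 * mu)) := by
    intro i
    rw [hd]
    field_simp
  have hsum : (1:ℝ) + ∑ i : Fin n, 2 * (d i)⁻¹ = 1 - (2 * (n : ℝ) ^ 2 + 3 * n) / mu := by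
    rw [← sum_45 n, Finset.sum_div, sub_eq_add_neg, ← Finset.sum_neg_distrib]
    congr 1
    refine Finset.sum_congr rfl fun i _ => ?_
    rw [hdi]
    field_simp
  have hprod : ∏ i : Fin n, d i
      = (-1) ^ n * (2 * mu) ^ n / (4 ^ n * (ascPochhammer ℝ n).eval (5 / 4 : ℝ)) := by
    rw [← prod_45 n]
    have : ∀ i : Fin n, d i = (-1) * ((2 * mu) * (4 * ((i : ℕ) + 1 : ℝ) + 1)⁻¹) := by
      intro i; rw [hd]; field_simp
    rw [Finset.prod_congr rfl fun i _ => this i, Finset.prod_mul_distrib,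
      Finset.prod_mul_distrib, Finset.prod_const, Finset.prod_const,
      Finset.prod_inv_distrib, Finset.card_univ, Fintype.card_fin]
    ring
  rw [hsum, hprod]
  obtain ⟨m, rfl⟩ : ∃ m, n = m + 1 := ⟨n - 1, by omega⟩
  have hPne : (ascPochhammer ℝ (m+1)).eval (5 / 4 : ℝ) ≠ 0 := hP.ne'
  simp only [Nat.add_sub_cancel]
  rw [show (4:ℝ) ^ (m+1) = 2 ^ (m+1) * 2 ^ (m+1) from by rw [← mul_pow]; norm_num]
  field_simp
  ring
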